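/- Let g = g_{5,3,7}. For every F ∈ g*, the skew-symmetric bilinear form B_F has rank either 0 or 2; equivalently, the subspace {X ∈ g : F([X, Y]) = 0 for all Y ∈ g} has dimension 5 or 3. (This is the infinitesimal MD-condition: every coadjoint orbit of the corresponding connected simply connected Lie group G_{5,3,7} has dimension 0 or 2, so it is an MD5-group.) -/

import Mathlib

open scoped Matrix

/-- The Lie bracket of g_{5,3,7}: [X1,X2] = X3, [X2,X3] = X3, [X2,X4] = X3 + X4, [X2,X5] = X4 + X5,
written in coordinates with respect to the basis (X₁, X₂, X₃, X₄, X₅) (all other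
brackets of basis vectors vanish); it is the bilinear extension of the structure
constants above. -/
def bracketg537 (U V : Fin 5 → ℝ) : Fin 5 → ℝ :=
  ![0, 0,
    (U 0 * V 1 - U 1 * V 0) + (U 1 * V 2 - U 2 * V 1) + (U 1 * V 3 - U 3 * V 1),
    (U 1 * V 3 - U 3 * V 1) + (U 1 * V 4 - U 4 * V 1),
    U 1 * V 4 - U 4 * V 1]

/-- The matrix (in the basis (X₁, ..., X₅)) of the skew-symmetric bilinear form
B_F(X, Y) = F([X, Y]); the functional F is identified with its coordinate vector with
respect to the dual basis, acting by the dot product. -/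
def BFg537 (F : Fin 5 → ℝ) : Matrix (Fin 5) (Fin 5) ℝ :=
  Matrix.of fun i j => F ⬝ᵥ bracketg537 (Pi.single i 1) (Pi.single j 1)

/-- The radical {X ∈ g | F([X, Y]) = 0 for all Y ∈ g} of the form B_F, as a subspace. -/
def radg537 (F : Fin 5 → ℝ) : Submodule ℝ (Fin 5 → ℝ) where
  carrier := {X | ∀ Y : Fin 5 → ℝ, F ⬝ᵥ bracketg537 X Y = 0}
  zero_mem' := by
    intro Y
    simp [bracketg537, dotProduct, Fin.sum_univ_five]
  add_mem' := by
    intro a b ha hb Y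
    have h1 := ha Y
    have h2 := hb Y
    simp only [bracketg537, dotProduct, Fin.sum_univ_five, Matrix.cons_val_zero,
      Matrix.cons_val_one, Matrix.head_cons, Matrix.cons_val_two, Matrix.tail_cons,
      Matrix.cons_val_three, Matrix.cons_val_four, Pi.add_apply] at h1 h2 ⊢
    linear_combination h1 + h2
  smul_mem' := by
    intro c a ha Y
    have h1 := ha Y
    simp only [bracketg537, dotProduct, Fin.sum_univ_five, Matrix.cons_val_zero,
      Matrix.cons_val_one, Matrix.head_cons, Matrix.cons_val_two, Matrix.tail_cons,
      Matrix.cons_val_three, Matrix.cons_val_four, Pi.smul_apply, smul_eq_mul] at h1 ⊢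
    linear_combination c * h1

/-- Auxiliary linear map whose kernel is the radical (in the nonzero case). -/
def Tg537 (F : Fin 5 → ℝ) : (Fin 5 → ℝ) →ₗ[ℝ] ℝ × ℝ where
  toFun X := (X 1, F 2 * (X 0 - X 2 - X 3) - F 3 * (X 3 + X 4) - F 4 * X 4)
  map_add' X Y := by
    simp only [Pi.add_apply, Prod.mk_add_mk, Prod.mk.injEq]
    exact ⟨trivial, by ring⟩
  map_smul' c X := by
    simp only [Pi.smul_apply, smul_eq_mul, RingHom.id_apply, Prod.smul_mk, smul_eq_mul,
      Prod.mk.injEq]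
    exact ⟨trivial, by ring⟩

lemma Tg537_surjective (F : Fin 5 → ℝ) (h : ¬ (F 2 = 0 ∧ F 3 = 0 ∧ F 4 = 0)) :
    Function.Surjective (Tg537 F) := by
  rintro ⟨a, b⟩
  by_cases h2 : F 2 = 0
  · by_cases h3 : F 3 = 0
    · have h4 : F 4 ≠ 0 := fun h4 => h ⟨h2, h3, h4⟩
      refine ⟨![0, a, 0, 0, -b / F 4], ?_⟩
      simp only [Tg537, LinearMap.coe_mk, AddHom.coe_mk, Matrix.cons_val_one, Matrix.head_cons,
        Matrix.cons_val_zero, Matrix.cons_val_two, Matrix.tail_cons, Matrix.cons_val_three,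
        Matrix.cons_val_four, h2, h3, Prod.mk.injEq]
      refine ⟨trivial, ?_⟩
      field_simp
      ring
    · refine ⟨![0, a, 0, -b / F 3, 0], ?_⟩
      simp only [Tg537, LinearMap.coe_mk, AddHom.coe_mk, Matrix.cons_val_one, Matrix.head_cons,
        Matrix.cons_val_zero, Matrix.cons_val_two, Matrix.tail_cons, Matrix.cons_val_three,
        Matrix.cons_val_four, h2, Prod.mk.injEq]
      refine ⟨trivial, ?_⟩
      field_simp
      ring
  · refine ⟨![b / F 2, a, 0, 0, 0], ?_⟩
    simp only [Tg537, LinearMap.coe_mk, AddHom.coe_mk, Matrix.cons_val_one, Matrix.head_cons,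
      Matrix.cons_val_zero, Matrix.cons_val_two, Matrix.tail_cons, Matrix.cons_val_three,
      Matrix.cons_val_four, Prod.mk.injEq]
    refine ⟨trivial, ?_⟩
    field_simp
    ring

lemma mem_radg537_iff (F : Fin 5 → ℝ) (X : Fin 5 → ℝ) :
    X ∈ radg537 F ↔
      (F 2 * X 1 = 0 ∧ (F 2 + F 3) * X 1 = 0 ∧ (F 3 + F 4) * X 1 = 0 ∧
        F 2 * (X 0 - X 2 - X 3) - F 3 * (X 3 + X 4) - F 4 * X 4 = 0) := by
  constructor
  · intro hX
    have hE1 := hX ![0, 1, 0, 0, 0]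
    have hE2 := hX ![0, 0, 1, 0, 0]
    have hE3 := hX ![0, 0, 0, 1, 0]
    have hE4 := hX ![0, 0, 0, 0, 1]
    simp only [bracketg537, dotProduct, Fin.sum_univ_five, Matrix.cons_val_zero,
      Matrix.cons_val_one, Matrix.head_cons, Matrix.cons_val_two, Matrix.tail_cons,
      Matrix.cons_val_three, Matrix.cons_val_four] at hE1 hE2 hE3 hE4
    refine ⟨by linear_combination hE2, by linear_combination hE3,
      by linear_combination hE4, by linear_combination hE1⟩
  · rintro ⟨h1, h2, h3, h4⟩ Y
    simp only [bracketg537, dotProduct, Fin.sum_univ_five, Matrix.cons_val_zero,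
      Matrix.cons_val_one, Matrix.head_cons, Matrix.cons_val_two, Matrix.tail_cons,
      Matrix.cons_val_three, Matrix.cons_val_four]
    linear_combination (Y 2 - Y 0) * h1 + Y 3 * h2 + Y 4 * h3 + Y 1 * h4

lemma mulVec_g537 (F Y : Fin 5 → ℝ) :
    (!![0, F 2, 0, 0, 0;
        -F 2, 0, F 2, F 2 + F 3, F 3 + F 4;
        0, -F 2, 0, 0, 0;
        0, -(F 2 + F 3), 0, 0, 0;
        0, -(F 3 + F 4), 0, 0, 0] : Matrix (Fin 5) (Fin 5) ℝ) *ᵥ Y =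
    ![F 2 * Y 1,
      -(F 2 * Y 0) + F 2 * Y 2 + (F 2 + F 3) * Y 3 + (F 3 + F 4) * Y 4,
      -(F 2 * Y 1), -((F 2 + F 3) * Y 1), -((F 3 + F 4) * Y 1)] := by
  funext i
  fin_cases i <;>
    simp [Matrix.mulVec, dotProduct, Fin.sum_univ_five, Matrix.vecHead,
      Matrix.vecTail] <;> ring

/-- For every functional F, the skew-symmetric form B_F has rank 0 or 2; equivalently,
its radical {X | F([X, Y]) = 0 for all Y} has dimension 5 or 3 (the infinitesimal
MD-condition: every coadjoint orbit has dimension 0 or 2). -/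
theorem md_condition_g537 (F : Fin 5 → ℝ) :
    ((BFg537 F).rank = 0 ∨ (BFg537 F).rank = 2) ∧
    (Module.finrank ℝ (radg537 F) = 5 ∨ Module.finrank ℝ (radg537 F) = 3) := by
  have hB : BFg537 F =
      !![0, F 2, 0, 0, 0;
         -F 2, 0, F 2, F 2 + F 3, F 3 + F 4;
         0, -F 2, 0, 0, 0;
         0, -(F 2 + F 3), 0, 0, 0;
         0, -(F 3 + F 4), 0, 0, 0] := by
    ext i j
    fin_cases i <;> fin_cases j <;>
      simp [BFg537, bracketg537, dotProduct, Fin.sum_univ_five, Pi.single,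
        Matrix.vecHead, Matrix.vecTail] <;> ring_nf
  by_cases h : F 2 = 0 ∧ F 3 = 0 ∧ F 4 = 0
  · obtain ⟨h2, h3, h4⟩ := h
    constructor
    · left
      rw [hB, h2, h3, h4]
      have hz : (!![0, (0:ℝ), 0, 0, 0; -0, 0, 0, 0 + 0, 0 + 0; 0, -0, 0, 0, 0;
          0, -(0 + 0), 0, 0, 0; 0, -(0 + 0), 0, 0, 0] : Matrix (Fin 5) (Fin 5) ℝ) = 0 := by
        ext i j; fin_cases i <;> fin_cases j <;> simp [Matrix.vecHead, Matrix.vecTail]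
      rw [hz, Matrix.rank_zero]
    · left
      have ht : radg537 F = ⊤ := by
        rw [eq_top_iff]
        intro X _
        rw [mem_radg537_iff]
        simp [h2, h3, h4]
      rw [ht, finrank_top]
      simp
  · -- nonzero case
    have hrad : radg537 F = LinearMap.ker (Tg537 F) := by
      ext X
      rw [mem_radg537_iff, LinearMap.mem_ker]
      constructor
      · rintro ⟨h1, h2', h3', h4'⟩
        have hX1 : X 1 = 0 := by
          by_contra hX1
          have e2 := (mul_eq_zero.mp h1).resolve_right hX1
          have e23 := (mul_eq_zero.mp h2').resolve_right hX1
          have e34 := (mul_eq_zero.mp h3').resolve_right hX1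
          exact h ⟨e2, by linarith, by linarith⟩
        simp only [Tg537, LinearMap.coe_mk, AddHom.coe_mk, Prod.mk_eq_zero]
        exact ⟨hX1, h4'⟩
      · intro hT
        simp only [Tg537, LinearMap.coe_mk, AddHom.coe_mk, Prod.mk_eq_zero] at hT
        obtain ⟨hX1, heq⟩ := hT
        exact ⟨by rw [hX1]; ring, by rw [hX1]; ring, by rw [hX1]; ring, heq⟩
    have hker : Module.finrank ℝ (LinearMap.ker (Tg537 F)) = 3 := by
      have hr := LinearMap.finrank_range_add_finrank_ker (Tg537 F)
      have hrange : LinearMap.range (Tg537 F) = ⊤ :=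
        LinearMap.range_eq_top.mpr (Tg537_surjective F h)
      rw [hrange, finrank_top] at hr
      simp only [Module.finrank_pi, Fintype.card_fin] at hr
      have h2 : Module.finrank ℝ (ℝ × ℝ) = 2 := by simp
      omega
    have hradfin : Module.finrank ℝ (radg537 F) = 3 := by rw [hrad]; exact hker
    have hkerB : LinearMap.ker (BFg537 F).mulVecLin = LinearMap.ker (Tg537 F) := by
      ext Y
      rw [LinearMap.mem_ker, LinearMap.mem_ker, Matrix.mulVecLin_apply, hB, mulVec_g537]
      constructor
      · intro hY
        have h0 := congrFun hY 0
        have h1 := congrFun hY 1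
        have h3' := congrFun hY 3
        have h4' := congrFun hY 4
        simp only [Matrix.cons_val_zero, Matrix.cons_val_one, Matrix.head_cons,
          Matrix.cons_val_two, Matrix.tail_cons, Matrix.cons_val_three, Matrix.cons_val_four,
          Pi.zero_apply, neg_eq_zero] at h0 h1 h3' h4'
        have hY1 : Y 1 = 0 := by
          by_contra hY1
          have e2 := (mul_eq_zero.mp h0).resolve_right hY1
          have e23 := (mul_eq_zero.mp h3').resolve_right hY1
          have e34 := (mul_eq_zero.mp h4').resolve_right hY1
          exact h ⟨e2, by linarith, by linarith⟩
        simp only [Tg537, LinearMap.coe_mk, AddHom.coe_mk, Prod.mk_eq_zero]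
        exact ⟨hY1, by linear_combination -h1⟩
      · intro hT
        simp only [Tg537, LinearMap.coe_mk, AddHom.coe_mk, Prod.mk_eq_zero] at hT
        obtain ⟨hY1, heq⟩ := hT
        funext i
        fin_cases i <;> simp [hY1] <;> linear_combination -heq
    have hrank : (BFg537 F).rank = 2 := by
      have hr := LinearMap.finrank_range_add_finrank_ker (BFg537 F).mulVecLin
      rw [hkerB, hker] at hr
      simp only [Module.finrank_pi, Fintype.card_fin] at hr
      have hdef : (BFg537 F).rank =
          Module.finrank ℝ (LinearMap.range (BFg537 F).mulVecLin) := rfl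
      omega
    exact ⟨Or.inr hrank, Or.inr hradfin⟩
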